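/- Nonnegativity of the most time-critical secondary CBF implies the corresponding primary CBFs are nonnegative: with d₁ := -Dist(x, P_{S(1)})/u_max ≥ 0 (assuming x ∉ interior, so Dist(x,P_{S(1)}) ≤ 0) and d_{l-1,l} := Dist(P_{S(l-1)}, P_{S(l)})/u_max ≥ 0, if b_i = r_{S(i)} - d₁ - ∑_{l=2}^{i} d_{l-1,l} ≥ 0 for some i, then r_{S(i)} ≥ dist(x, P_{S(i)})/u_max, i.e., the primary CBF h_{S(i)}(x, t) = r_{S(i)} - dist(x, P_{S(i)})/u_max is nonnegative. -/
import Mathlib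


/-- Ordered (directed) set distance: `Dist(P,Q) = sup_{p ∈ P} inf_{q ∈ Q} d(p,q)`. -/
noncomputable def orderedDist {X : Type*} [MetricSpace X] (A B : Set X) : ℝ :=
  ⨆ x : A, Metric.infDist (x : X) B

lemma infDist_le_infDist_add_orderedDist {X : Type*} [MetricSpace X]
    {A B : Set X} (hA : IsCompact A) (hAne : A.Nonempty) (x : X) :
    Metric.infDist x B ≤ Metric.infDist x A + orderedDist A B := by
  obtain ⟨a, haA, ha⟩ := hA.exists_infDist_eq_dist hAne x
  obtain ⟨a0, ha0A, hmax⟩ := hA.exists_isMaxOn hAne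
    (Metric.continuous_infDist_pt B).continuousOn
  have hbdd : BddAbove (Set.range fun p : A => Metric.infDist (p : X) B) := by
    refine ⟨Metric.infDist a0 B, ?_⟩
    rintro _ ⟨p, rfl⟩
    exact hmax p.2
  have h1 : Metric.infDist a B ≤ orderedDist A B :=
    le_ciSup hbdd (⟨a, haA⟩ : A)
  calc Metric.infDist x B ≤ Metric.infDist a B + dist x a :=
        Metric.infDist_le_infDist_add_dist
    _ ≤ orderedDist A B + Metric.infDist x A := by rw [ha]; linarith
    _ = Metric.infDist x A + orderedDist A B := by ring

/-- Nonnegativity of the secondary CBF candidate `b_i` implies nonnegativity of the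
corresponding primary CBF `h_{S(i)}`. The sets are indexed `0,…,k-1` for `S(1),…,S(k)`. -/
theorem secondary_cbf_implies_primary {X : Type*} [MetricSpace X]
    (k : ℕ) (P : ℕ → Set X)
    (hPne : ∀ j < k, (P j).Nonempty) (hPc : ∀ j < k, IsCompact (P j))
    (x : X) (u_max : ℝ) (hu : 0 < u_max) (r : ℕ → ℝ) (i : ℕ) (hik : i < k)
    (hb : 0 ≤ r i - Metric.infDist x (P 0) / u_max -
        ∑ l ∈ Finset.Icc 1 i, orderedDist (P (l - 1)) (P l) / u_max) :
    Metric.infDist x (P i) / u_max ≤ r i := by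
  have key : ∀ i, i < k → Metric.infDist x (P i) ≤ Metric.infDist x (P 0)
      + ∑ l ∈ Finset.Icc 1 i, orderedDist (P (l - 1)) (P l) := by
    intro i hi
    induction i with
    | zero => simp
    | succ n ih =>
      have hn : n < k := Nat.lt_of_succ_lt hi
      have hstep : Metric.infDist x (P (n + 1)) ≤ Metric.infDist x (P n)
          + orderedDist (P n) (P (n + 1)) :=
        infDist_le_infDist_add_orderedDist (hPc n hn) (hPne n hn) x
      have hsum : ∑ l ∈ Finset.Icc 1 (n + 1), orderedDist (P (l - 1)) (P l)
          = (∑ l ∈ Finset.Icc 1 n, orderedDist (P (l - 1)) (P l))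
            + orderedDist (P n) (P (n + 1)) := by
        rw [Finset.sum_Icc_succ_top (by omega : 1 ≤ n + 1)]
        simp
      have := ih hn
      rw [hsum]
      linarith
  have h := key i hik
  rw [← Finset.sum_div] at hb
  have h2 : Metric.infDist x (P i) / u_max ≤ (Metric.infDist x (P 0)
      + ∑ l ∈ Finset.Icc 1 i, orderedDist (P (l - 1)) (P l)) / u_max :=
    div_le_div_of_nonneg_right h hu.le |>.trans_eq rfl
  rw [add_div] at h2
  linarith
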